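/- Let r ≥ 1 and 1 ≤ m ≤ r be integers, let G₁, …, G_r be groups, let Q be a finitely generated abelian group, and let φ : G₁ × ⋯ × G_r → Q be a surjective group homomorphism. Assume that H = ker φ surjects onto m-tuples, i.e. for every 1 ≤ i₁ < ⋯ < i_m ≤ r the projection satisfies p_{i₁,…,i_m}(H) = G_{i₁} × ⋯ × G_{i_m}. Then for every 1 ≤ j₁ < ⋯ < j_{r−m} ≤ r the restriction of φ to the subgroup G_{j₁} × ⋯ × G_{j_{r−m}} of G₁ × ⋯ × G_r is surjective onto Q. (Lemma 6.2, second part.) -/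
import Mathlib


/-- Lemma 6.2 (second part): if `φ : G₁ × ⋯ × G_r → Q` is an epimorphism onto a finitely
generated abelian group whose kernel surjects onto `m`-tuples, then the restriction of `φ`
to any sub-product of `r − m` of the factors is surjective onto `Q`. -/
theorem stmt_7 {r : ℕ} (hr : 1 ≤ r) (m : ℕ) (hm : 1 ≤ m) (hmr : m ≤ r)
    (G : Fin r → Type*) [∀ i, Group (G i)]
    (Q : Type*) [CommGroup Q] (hQfg : Group.FG Q)
    (φ : (∀ i, G i) →* Q) (hφ : Function.Surjective φ)
    (hsurj : ∀ S : Finset (Fin r), S.card = m →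
      Subgroup.map (Pi.monoidHom (fun i : {x // x ∈ S} => Pi.evalMonoidHom G i.1))
        φ.ker = ⊤) :
    ∀ T : Finset (Fin r), T.card = r - m →
      Subgroup.map φ (Subgroup.pi ((↑T : Set (Fin r))ᶜ) (fun _ => ⊥)) = ⊤ := by
  intro T hT
  have hS : Tᶜ.card = m := by
    rw [Finset.card_compl, hT, Fintype.card_fin]
    omega
  have hmap := hsurj Tᶜ hS
  rw [eq_top_iff]
  intro q _
  obtain ⟨x, hx⟩ := hφ q
  have : (fun i : {y // y ∈ Tᶜ} => x i.1) ∈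
      Subgroup.map (Pi.monoidHom (fun i : {y // y ∈ Tᶜ} => Pi.evalMonoidHom G i.1))
        φ.ker := by rw [hmap]; trivial
  obtain ⟨h, hker, hh⟩ := this
  refine ⟨x * h⁻¹, ?_, ?_⟩
  · intro i hi
    have hi' : i ∈ Tᶜ := by simpa using hi
    have := congrFun hh ⟨i, hi'⟩
    simp only [Pi.monoidHom, MonoidHom.coe_mk, OneHom.coe_mk, Pi.evalMonoidHom] at this
    simp [Pi.mul_apply, Pi.inv_apply]
    rw [show h i = x i from this]
    simp
  · have h1 : φ h = 1 := hker
    rw [map_mul, map_inv, hx, h1]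
    simp
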